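/- Let G be an arbitrary marked digraph with at least one marked vertex. Then N*_G = |M̄_G| + |S²_G|; that is, there exists a set Λ ⊆ V with |Λ| = |M̄_G| + |S²_G| and a control of Λ whose resulting marked digraph satisfies both Property P1 and Property P2, and no set of smaller cardinality admits such a control. -/

import Mathlib

/-- `u` is the unique in-neighbor of `w` in the digraph with edge relation `E`. -/
def UniqueInNbr {V : Type*} (E : V → V → Prop) (u w : V) : Prop :=
  E u w ∧ ∀ u', E u' w → u' = u

/-- Property P1: every simple (non-marked) vertex `v` has some vertex `v'`
whose unique in-neighbor is `v`. -/
def SatisfiesP1 {V : Type*} (E : V → V → Prop) (O : Set V) : Prop :=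
  ∀ v, v ∉ O → ∃ v', UniqueInNbr E v v'

/-- A directed (simple) cycle of length `m + 1`, given by an injective cyclic
sequence of vertices with consecutive edges (indices mod `m + 1`). -/
def IsCycle {V : Type*} (E : V → V → Prop) {m : ℕ} (c : Fin (m + 1) → V) : Prop :=
  Function.Injective c ∧ ∀ j, E (c j) (c (j + 1))

/-- A cycle `c` satisfies Property P2 if some vertex `v` off the cycle has a
vertex of the cycle as its unique in-neighbor. -/
def CycleSatisfiesP2 {V : Type*} (E : V → V → Prop) {m : ℕ} (c : Fin (m + 1) → V) : Prop :=
  ∃ v, (∀ j, c j ≠ v) ∧ ∃ j, UniqueInNbr E (c j) v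

/-- Property P2: every directed cycle consisting entirely of simple vertices
satisfies Property P2. -/
def SatisfiesP2 {V : Type*} (E : V → V → Prop) (O : Set V) : Prop :=
  ∀ (m : ℕ) (c : Fin (m + 1) → V), IsCycle E c → (∀ j, c j ∉ O) → CycleSatisfiesP2 E c


/-- `Ehat` is obtained from `E` by controlling the vertices of `Λ`: every
vertex not in `Λ` keeps exactly the same in-neighbors. -/
def Control {V : Type*} (E Ehat : V → V → Prop) (Λ : Set V) : Prop :=
  ∀ w, w ∉ Λ → ∀ u, Ehat u w ↔ E u w

/-- `Mbar E O` is the set of simple vertices that do not satisfy Property P1. -/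
def Mbar {V : Type*} (E : V → V → Prop) (O : Set V) : Set V :=
  {v | v ∉ O ∧ ¬ ∃ w, UniqueInNbr E v w}

/-- A digraph is acyclic if it contains no directed cycle. -/
def Acyclic {V : Type*} (E : V → V → Prop) : Prop :=
  ¬ ∃ (m : ℕ) (c : Fin (m + 1) → V), IsCycle E c


/-- An observed-path-compatible cycle (OP-CC): a directed cycle in which each
vertex is the unique in-neighbor of its successor (indices taken cyclically). -/
def IsOPCC {V : Type*} (E : V → V → Prop) {m : ℕ} (c : Fin (m + 1) → V) : Prop :=
  Function.Injective c ∧ ∀ j, UniqueInNbr E (c j) (c (j + 1))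

/-- `S2 E O` is the collection of (vertex sets of) OP-CCs consisting entirely
of simple vertices that do not satisfy Property P2. -/
def S2 {V : Type*} (E : V → V → Prop) (O : Set V) : Set (Set V) :=
  {S | ∃ (m : ℕ) (c : Fin (m + 1) → V),
        IsOPCC E c ∧ (∀ j, c j ∉ O) ∧ ¬ CycleSatisfiesP2 E c ∧ Set.range c = S}


open Fin.NatCast Fin.CommRing

section Helpers

variable {V : Type*}

lemma uin_eq {E : V → V → Prop} {u u' w : V}
    (h : UniqueInNbr E u w) (h' : UniqueInNbr E u' w) : u = u' :=
  (h.2 u' h'.1).symm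

open Classical in
noncomputable def witF (E : V → V → Prop) (w : V) : V :=
  if h : ∃ u, UniqueInNbr E u w then h.choose else w

lemma witF_spec {E : V → V → Prop} {w u : V} (h : UniqueInNbr E u w) : witF E w = u := by
  have hex : ∃ u, UniqueInNbr E u w := ⟨u, h⟩
  classical
  rw [witF, dif_pos hex]
  exact uin_eq hex.choose_spec h

lemma opcc_iter {E : V → V → Prop} {m : ℕ} {c : Fin (m+1) → V} (hc : IsOPCC E c)
    (j : Fin (m+1)) : ∀ k : ℕ, (witF E)^[k] (c j) = c (j - (k : Fin (m+1))) := by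
  intro k
  induction k with
  | zero => simp
  | succ k ih =>
    rw [Function.iterate_succ_apply', ih]
    have h1 := hc.2 (j - (k : Fin (m+1)) - 1)
    rw [sub_add_cancel] at h1
    have : witF E (c (j - (k : Fin (m+1)))) = c (j - (k : Fin (m+1)) - 1) := witF_spec h1
    rw [this]
    congr 1
    push_cast
    ring

lemma opcc_range_orbit {E : V → V → Prop} {m : ℕ} {c : Fin (m+1) → V} (hc : IsOPCC E c)
    {u : V} (hu : u ∈ Set.range c) :
    Set.range c = {w | ∃ k : ℕ, (witF E)^[k] u = w} := by
  obtain ⟨j, rfl⟩ := hu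
  ext w
  constructor
  · rintro ⟨i, rfl⟩
    refine ⟨((j - i : Fin (m+1)) : ℕ), ?_⟩
    rw [opcc_iter hc j]
    congr 1
    rw [Fin.cast_val_eq_self]
    exact sub_sub_cancel j i
  · rintro ⟨k, rfl⟩
    rw [opcc_iter hc j]
    exact ⟨_, rfl⟩

lemma opcc_range_eq {E : V → V → Prop} {m m' : ℕ} {c : Fin (m+1) → V} {c' : Fin (m'+1) → V}
    (hc : IsOPCC E c) (hc' : IsOPCC E c') {u : V}
    (h : u ∈ Set.range c) (h' : u ∈ Set.range c') :
    Set.range c = Set.range c' := by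
  rw [opcc_range_orbit hc h, opcc_range_orbit hc' h']

lemma failing_target {E : V → V → Prop} {m : ℕ} {c : Fin (m+1) → V} (hc : IsOPCC E c)
    (hfail : ¬ CycleSatisfiesP2 E c) {j : Fin (m+1)} {z : V}
    (hz : UniqueInNbr E (c j) z) : z = c (j + 1) := by
  by_cases hzr : ∃ k, c k = z
  · obtain ⟨k, rfl⟩ := hzr
    have h1 := hc.2 (k - 1)
    rw [sub_add_cancel] at h1
    have h2 : c (k-1) = c j := uin_eq h1 hz
    have h3 : k - 1 = j := hc.1 h2
    rw [← h3, sub_add_cancel]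
  · exact absurd ⟨z, fun k hk => hzr ⟨k, hk⟩, j, hz⟩ hfail

lemma failing_cycle_opcc {E : V → V → Prop} {O : Set V} {m : ℕ} {c : Fin (m+1) → V}
    (hc : IsCycle E c) (hs : ∀ j, c j ∉ O) (hfail : ¬ CycleSatisfiesP2 E c)
    (hM : ∀ j, c j ∉ Mbar E O) : IsOPCC E c := by
  refine ⟨hc.1, fun j => ?_⟩
  have hex : ∃ w, UniqueInNbr E (c j) w := by
    have h := hM j
    simp only [Mbar, Set.mem_setOf_eq, not_and, not_not] at h
    exact h (hs j)
  obtain ⟨w, hw⟩ := hex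
  by_cases hwr : ∃ k, c k = w
  · obtain ⟨k, rfl⟩ := hwr
    have h1 : E (c (k-1)) (c k) := by have := hc.2 (k-1); rwa [sub_add_cancel] at this
    have h2 : c (k-1) = c j := hw.2 _ h1
    have h3 : k - 1 = j := hc.1 h2
    have h4 : k = j + 1 := by rw [← h3, sub_add_cancel]
    rwa [← h4]
  · exact absurd ⟨w, fun k hk => hwr ⟨k, hk⟩, j, hw⟩ hfail

def Redirect (E : V → V → Prop) (x t : V) : V → V → Prop :=
  fun a b => (b = x ∧ a = t) ∨ (b ≠ x ∧ E a b)

lemma uin_redirect_ne {E : V → V → Prop} {x t u w : V} (hw : w ≠ x) :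
    UniqueInNbr (Redirect E x t) u w ↔ UniqueInNbr E u w := by
  simp [UniqueInNbr, Redirect, hw]

lemma uin_redirect_self {E : V → V → Prop} {x t u : V} :
    UniqueInNbr (Redirect E x t) u x ↔ u = t := by
  constructor
  · rintro ⟨h1, _⟩
    simpa [Redirect] using h1
  · rintro rfl
    exact ⟨by simp [Redirect], fun u' h => by simpa [Redirect] using h⟩

lemma uin_control {E Ehat : V → V → Prop} {Λ : Set V} (hctl : Control E Ehat Λ)
    {u w : V} (hw : w ∉ Λ) : UniqueInNbr Ehat u w ↔ UniqueInNbr E u w := by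
  unfold UniqueInNbr
  constructor
  · rintro ⟨h1, h2⟩
    exact ⟨(hctl w hw u).1 h1, fun u' hu' => h2 u' ((hctl w hw u').2 hu')⟩
  · rintro ⟨h1, h2⟩
    exact ⟨(hctl w hw u).2 h1, fun u' hu' => h2 u' ((hctl w hw u').1 hu')⟩

end Helpers

section Part2

variable {V : Type*}

def SafeFor (E : V → V → Prop) (O : Set V) (x : V) : Prop :=
  ∀ u, UniqueInNbr E u x → u ∉ O →
    (∃ z, z ≠ x ∧ UniqueInNbr E u z) ∧
    (∀ (m : ℕ) (c : Fin (m+1) → V), IsOPCC E c → (∀ j, c j ∉ O) → (∃ j, c j = u) →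
      ∃ z, z ∉ Set.range c ∧ z ≠ x ∧ ∃ j, UniqueInNbr E (c j) z)

lemma unsafe_data {E : V → V → Prop} {O : Set V} {x : V} (h : ¬ SafeFor E O x) :
    ∃ u, UniqueInNbr E u x ∧ u ∉ O := by
  rw [SafeFor] at h
  push_neg at h
  obtain ⟨u, h1, h2, _⟩ := h
  exact ⟨u, h1, h2⟩

lemma unsafe_vict_inj {E : V → V → Prop} {O : Set V} {x₁ x₂ u : V}
    (h1 : ¬ SafeFor E O x₁) (h2 : ¬ SafeFor E O x₂)
    (hu1 : UniqueInNbr E u x₁) (hu2 : UniqueInNbr E u x₂) : x₁ = x₂ := by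
  by_contra hne
  rw [SafeFor] at h1 h2
  push_neg at h1 h2
  obtain ⟨u₁, hu₁, hu₁O, hbad₁⟩ := h1
  obtain ⟨u₂, hu₂', hu₂O, hbad₂⟩ := h2
  have e1 : u₁ = u := uin_eq hu₁ hu1
  have e2 : u₂ = u := uin_eq hu₂' hu2
  rw [e1] at hbad₁
  rw [e2] at hbad₂
  have hB1 := hbad₁ ⟨x₂, fun h => hne h.symm, hu2⟩
  have hB2 := hbad₂ ⟨x₁, hne, hu1⟩
  obtain ⟨m₁, c₁, hc₁, hs₁, hj₁, hz₁⟩ := hB1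
  obtain ⟨m₂, c₂, hc₂, hs₂, hj₂, hz₂⟩ := hB2
  obtain ⟨j₁, hj₁⟩ := hj₁
  obtain ⟨j₂, hj₂⟩ := hj₂
  have hre : Set.range c₁ = Set.range c₂ :=
    opcc_range_eq hc₁ hc₂ ⟨j₁, hj₁⟩ ⟨j₂, hj₂⟩
  by_cases hx2 : x₂ ∈ Set.range c₁
  · by_cases hx1 : x₁ ∈ Set.range c₁
    · obtain ⟨a, ha⟩ := hx1
      obtain ⟨b, hb⟩ := hx2
      have ha1 := hc₁.2 (a-1); rw [sub_add_cancel, ha] at ha1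
      have hb1 := hc₁.2 (b-1); rw [sub_add_cancel, hb] at hb1
      have ea : c₁ (a-1) = u := uin_eq ha1 hu1
      have eb : c₁ (b-1) = u := uin_eq hb1 hu2
      have : a - 1 = b - 1 := hc₁.1 (ea.trans eb.symm)
      have hab : a = b := by
        have := congrArg (· + 1) this
        simpa [sub_add_cancel] using this
      exact hne (ha ▸ hab ▸ hb)
    · rw [hre] at hx1
      exact hz₂ x₁ hx1 hne j₂ (hj₂ ▸ hu1)
  · exact hz₁ x₂ hx2 (fun h => hne h.symm) j₁ (hj₁ ▸ hu2)

lemma exists_safe_off [Fintype V] {E : V → V → Prop} {O : Set V} (hO : O.Nonempty)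
    (S : Set V) (hSO : ∀ v ∈ S, v ∉ O)
    (hface : ∀ u ∈ S, ∀ x, UniqueInNbr E u x → x ∈ S) :
    ∃ x, x ∉ S ∧ SafeFor E O x := by
  by_contra hcon
  push_neg at hcon
  set A : Set V := Sᶜ with hA
  have hinj : Set.InjOn (witF E) A := by
    intro x₁ hx₁ x₂ hx₂ heq
    have h1 := hcon x₁ hx₁
    have h2 := hcon x₂ hx₂
    obtain ⟨u₁, hu₁, _⟩ := unsafe_data h1
    obtain ⟨u₂, hu₂, _⟩ := unsafe_data h2
    rw [witF_spec hu₁, witF_spec hu₂] at heq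
    subst heq
    exact unsafe_vict_inj h1 h2 hu₁ hu₂
  have himg : witF E '' A ⊆ (S ∪ O)ᶜ := by
    rintro _ ⟨x, hxA, rfl⟩
    have h1 := hcon x hxA
    obtain ⟨u, hu, huO⟩ := unsafe_data h1
    rw [witF_spec hu]
    intro hmem
    rcases hmem with hmem | hmem
    · exact hxA (hface u hmem x hu)
    · exact huO hmem
  have hcard1 : A.ncard = (witF E '' A).ncard := (Set.ncard_image_of_injOn hinj).symm
  have hcard2 : (witF E '' A).ncard ≤ ((S ∪ O)ᶜ).ncard :=
    Set.ncard_le_ncard himg (Set.toFinite _)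
  have hlt : ((S ∪ O)ᶜ).ncard < A.ncard := by
    apply Set.ncard_lt_ncard _ (Set.toFinite _)
    constructor
    · intro z hz
      simp only [Set.mem_compl_iff, Set.mem_union, not_or] at hz
      exact fun h => hz.1 h
    · intro hsub
      obtain ⟨o, ho⟩ := hO
      have hoA : o ∈ A := fun h => hSO o h ho
      have := hsub hoA
      simp only [Set.mem_compl_iff, Set.mem_union, not_or] at this
      exact this.2 ho
  omega

lemma mbar_not_cycle {E : V → V → Prop} {O : Set V} {m : ℕ} {c : Fin (m+1) → V}
    (hc : IsOPCC E c) {v : V} (hv : v ∈ Mbar E O) (j : Fin (m+1)) : c j ≠ v := by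
  intro h
  exact hv.2 ⟨c (j+1), h ▸ hc.2 j⟩

lemma moveC {E : V → V → Prop} {O : Set V} {v : V} (hv : v ∈ Mbar E O)
    {m : ℕ} {c : Fin (m+1) → V} (hc : IsOPCC E c) (hs : ∀ j, c j ∉ O)
    (hfail : ¬ CycleSatisfiesP2 E c) :
    Mbar (Redirect E (c 0) v) O ⊆ (Mbar E O \ {v}) ∪ {c (0 - 1)} ∧
    S2 (Redirect E (c 0) v) O ⊆ S2 E O \ {Set.range c} := by
  have hvnc : ∀ j, c j ≠ v := mbar_not_cycle hc hv
  constructor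
  · rintro u ⟨huO, hnt⟩
    by_cases huv : u = v
    · subst huv
      exact absurd ⟨c 0, uin_redirect_self.2 rfl⟩ hnt
    by_cases huM : u ∈ Mbar E O
    · exact Or.inl ⟨huM, huv⟩
    have : ∃ w, UniqueInNbr E u w := by
      simp only [Mbar, Set.mem_setOf_eq, not_and, not_not] at huM
      exact huM huO
    obtain ⟨w, hw⟩ := this
    by_cases hwr : w = c 0
    · subst hwr
      have h1 := hc.2 (0 - 1)
      rw [sub_add_cancel] at h1
      exact Or.inr (uin_eq hw h1)
    · exact absurd ⟨w, (uin_redirect_ne hwr).2 hw⟩ hnt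
  · rintro W ⟨m', c', hc', hs', hfail', hrange⟩
    by_cases hr : c 0 ∈ Set.range c'
    · exfalso
      obtain ⟨jr, hjr⟩ := hr
      have key : ∀ t : ℕ, c' (jr + ((t+1 : ℕ) : Fin (m'+1))) ∈ Set.range c ∧
          c' (jr + ((t+1 : ℕ) : Fin (m'+1))) ≠ c 0 := by
        intro t
        induction t with
        | zero =>
          have huin := hc'.2 jr
          rw [hjr] at huin
          by_cases hs1 : c' (jr + 1) = c 0
          · rw [hs1] at huin
            exact absurd (uin_redirect_self.1 huin) (hvnc 0)
          · have huinE := (uin_redirect_ne hs1).1 huin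
            have hft := failing_target hc hfail huinE
            have hone : ((0+1 : ℕ) : Fin (m'+1)) = 1 := by norm_num
            rw [hone]
            exact ⟨hft ▸ ⟨0 + 1, rfl⟩, hs1⟩
        | succ t ih =>
          obtain ⟨hmem, hne⟩ := ih
          obtain ⟨k, hk⟩ := hmem
          have huin := hc'.2 (jr + ((t+1 : ℕ) : Fin (m'+1)))
          have hidx : jr + ((t+1 : ℕ) : Fin (m'+1)) + 1 = jr + ((t+2 : ℕ) : Fin (m'+1)) := by
            push_cast
            ring
          rw [hidx] at huin
          by_cases hs2 : c' (jr + ((t+2 : ℕ) : Fin (m'+1))) = c 0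
          · rw [hs2] at huin
            have : c' (jr + ((t+1 : ℕ) : Fin (m'+1))) = v := uin_redirect_self.1 huin
            rw [← hk] at this
            exact absurd this (hvnc k)
          · have huinE := (uin_redirect_ne hs2).1 huin
            rw [← hk] at huinE
            have := failing_target hc hfail huinE
            rw [hk] at huinE
            exact ⟨this ▸ ⟨k + 1, rfl⟩, hs2⟩
      have hfin := (key m').2
      have : ((m' + 1 : ℕ) : Fin (m'+1)) = 0 := by
        simp [Fin.natCast_self]
      rw [this, add_zero, hjr] at hfin
      exact hfin rfl
    · have hc'E : IsOPCC E c' := by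
        refine ⟨hc'.1, fun j => ?_⟩
        have hne : c' (j+1) ≠ c 0 := fun h => hr (h ▸ ⟨j+1, rfl⟩)
        exact (uin_redirect_ne hne).1 (hc'.2 j)
      have hPE : ¬ CycleSatisfiesP2 E c' := by
        rintro ⟨z, hoff, j, hz⟩
        by_cases hzr : z = c 0
        · subst hzr
          have h1 := hc.2 (0 - 1)
          rw [sub_add_cancel] at h1
          have : c' j = c (0 - 1) := uin_eq hz h1
          have hreq : Set.range c' = Set.range c :=
            opcc_range_eq hc'E hc ⟨j, this⟩ ⟨0 - 1, rfl⟩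
          exact hr (hreq ▸ ⟨0, rfl⟩)
        · exact hfail' ⟨z, hoff, j, (uin_redirect_ne hzr).2 hz⟩
      refine ⟨⟨m', c', hc'E, hs', hPE, hrange⟩, ?_⟩
      intro hW
      simp only [Set.mem_singleton_iff] at hW
      rw [← hrange] at hW
      exact hr (hW ▸ ⟨0, rfl⟩)

lemma moveD {E : V → V → Prop} {O : Set V} {x : V}
    {m : ℕ} {c : Fin (m+1) → V} (hc : IsOPCC E c) (hs : ∀ j, c j ∉ O)
    (hfail : ¬ CycleSatisfiesP2 E c) (hx : SafeFor E O x) (hxS : x ∉ Set.range c) :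
    Mbar (Redirect E x (c 0)) O ⊆ Mbar E O ∧
    S2 (Redirect E x (c 0)) O ⊆ S2 E O \ {Set.range c} := by
  constructor
  · rintro u ⟨huO, hnt⟩
    by_cases huM : u ∈ Mbar E O
    · exact huM
    have : ∃ w, UniqueInNbr E u w := by
      simp only [Mbar, Set.mem_setOf_eq, not_and, not_not] at huM
      exact huM huO
    obtain ⟨w, hw⟩ := this
    by_cases hwx : w = x
    · subst hwx
      obtain ⟨z, hzx, hz⟩ := (hx u hw huO).1
      exact absurd ⟨z, (uin_redirect_ne hzx).2 hz⟩ hnt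
    · exact absurd ⟨w, (uin_redirect_ne hwx).2 hw⟩ hnt
  · rintro W ⟨m', c', hc', hs', hfail', hrange⟩
    by_cases hxr : x ∈ Set.range c'
    · exfalso
      obtain ⟨jx, hjx⟩ := hxr
      have key : ∀ t : ℕ, c' (jx - ((t+1 : ℕ) : Fin (m'+1))) ∈ Set.range c := by
        intro t
        induction t with
        | zero =>
          have huin := hc'.2 (jx - 1)
          rw [sub_add_cancel, hjx] at huin
          have hred := uin_redirect_self.1 huin
          have hone : ((0+1 : ℕ) : Fin (m'+1)) = 1 := by norm_num
          rw [hone]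
          exact hred ▸ ⟨0, rfl⟩
        | succ t ih =>
          obtain ⟨k, hk⟩ := ih
          have huin := hc'.2 (jx - ((t+2 : ℕ) : Fin (m'+1)))
          have hidx : jx - ((t+2 : ℕ) : Fin (m'+1)) + 1 = jx - ((t+1 : ℕ) : Fin (m'+1)) := by
            push_cast
            ring
          rw [hidx] at huin
          have hne : c' (jx - ((t+1 : ℕ) : Fin (m'+1))) ≠ x := by
            intro h
            exact hxS (h ▸ ⟨k, hk⟩)
          have huinE := (uin_redirect_ne hne).1 huin
          rw [← hk] at huinE
          have h1 := hc.2 (k - 1)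
          rw [sub_add_cancel] at h1
          have : c' (jx - ((t+2 : ℕ) : Fin (m'+1))) = c (k-1) := uin_eq huinE h1
          exact this ▸ ⟨k - 1, rfl⟩
      have hfin := key m'
      have hz : ((m' + 1 : ℕ) : Fin (m'+1)) = 0 := by simp [Fin.natCast_self]
      rw [hz, sub_zero, hjx] at hfin
      exact hxS hfin
    · have hc'E : IsOPCC E c' := by
        refine ⟨hc'.1, fun j => ?_⟩
        have hne : c' (j+1) ≠ x := fun h => hxr (h ▸ ⟨j+1, rfl⟩)
        exact (uin_redirect_ne hne).1 (hc'.2 j)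
      by_cases hW : Set.range c' = Set.range c
      · exfalso
        have h0 : c 0 ∈ Set.range c' := hW ▸ ⟨0, rfl⟩
        obtain ⟨j, hj⟩ := h0
        refine hfail' ⟨x, fun k hk => hxr ⟨k, hk⟩, j, ?_⟩
        rw [hj]
        exact uin_redirect_self.2 rfl
      · have hPE : ¬ CycleSatisfiesP2 E c' := by
          rintro ⟨z, hoff, j, hz⟩
          by_cases hzx : z = x
          · subst hzx
            obtain ⟨z', hz'r, hz'x, j', hz'⟩ :=
              (hx (c' j) hz (hs' j)).2 m' c' hc'E hs' ⟨j, rfl⟩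
            exact hfail' ⟨z', fun k hk => hz'r ⟨k, hk⟩, j', (uin_redirect_ne hz'x).2 hz'⟩
          · exact hfail' ⟨z, hoff, j, (uin_redirect_ne hzx).2 hz⟩
        exact ⟨⟨m', c', hc'E, hs', hPE, hrange⟩, by
          simp only [Set.mem_singleton_iff]
          rw [← hrange]
          exact hW⟩

lemma base_P1 {E : V → V → Prop} {O : Set V} (hM : Mbar E O = ∅) : SatisfiesP1 E O := by
  intro v hv
  by_contra h
  have : v ∈ Mbar E O := ⟨hv, h⟩
  rw [hM] at this
  exact this

lemma base_P2 {E : V → V → Prop} {O : Set V} (hM : Mbar E O = ∅) (hS : S2 E O = ∅) :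
    SatisfiesP2 E O := by
  intro m c hc hsimp
  by_contra hfail
  have hopcc : IsOPCC E c := by
    apply failing_cycle_opcc hc hsimp hfail
    intro j h
    rw [hM] at h
    exact h
  have : Set.range c ∈ S2 E O := ⟨m, c, hopcc, hsimp, hfail, rfl⟩
  rw [hS] at this
  exact this

end Part2

section MoveB

variable {V : Type*}

noncomputable def chain (E : V → V → Prop) (o : V) : ℕ → V
  | 0 => o
  | k+1 => witF E (chain E o k)

lemma chain_succ (E : V → V → Prop) (o : V) (k : ℕ) :
    chain E o (k+1) = witF E (chain E o k) := rfl

lemma unsafe_chain_step {E : V → V → Prop} {O : Set V} {o : V} {k : ℕ}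
    (h : ¬ SafeFor E O (chain E o k)) :
    UniqueInNbr E (chain E o (k+1)) (chain E o k) ∧ chain E o (k+1) ∉ O := by
  obtain ⟨u, hu, huO⟩ := unsafe_data h
  have hch : chain E o (k+1) = u := by rw [chain_succ]; exact witF_spec hu
  rw [hch]
  exact ⟨hu, huO⟩

lemma exists_safe_chain [Fintype V] {E : V → V → Prop} {O : Set V} (hS2 : S2 E O = ∅)
    {o : V} (ho : o ∈ O) : ∃ k, SafeFor E O (chain E o k) := by
  classical
  by_contra hcon
  push_neg at hcon
  have hstep : ∀ k, UniqueInNbr E (chain E o (k+1)) (chain E o k) ∧ chain E o (k+1) ∉ O :=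
    fun k => unsafe_chain_step (hcon k)
  -- collision
  have hcol : ∃ b, ∃ a, a < b ∧ chain E o a = chain E o b := by
    obtain ⟨p, q, hpq, heq⟩ := Finite.exists_ne_map_eq_of_infinite (chain E o)
    rcases lt_or_gt_of_ne hpq with h | h
    · exact ⟨q, p, h, heq⟩
    · exact ⟨p, q, h, heq.symm⟩
  set b := Nat.find hcol with hb
  obtain ⟨a, hab, heq⟩ := Nat.find_spec hcol
  have hmin : ∀ b' < b, ¬ ∃ a', a' < b' ∧ chain E o a' = chain E o b' :=
    fun b' hb' => Nat.find_min hcol hb'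
  have ha1 : 1 ≤ a := by
    by_contra h
    push_neg at h
    interval_cases a
    have hbO : chain E o b ∉ O := by
      have hb1 : b = (b-1) + 1 := by omega
      rw [hb1]
      exact (hstep (b-1)).2
    rw [← heq] at hbO
    exact hbO ho
  set m := b - a - 1 with hm
  have hbm : b = a + m + 1 := by omega
  -- the cycle
  set c : Fin (m+1) → V := fun i => chain E o (b - 1 - i.val) with hcdef
  have hcidx : ∀ i : Fin (m+1), a ≤ b - 1 - i.val ∧ b - 1 - i.val ≤ b - 1 := by
    intro i
    have := i.isLt
    omega
  have hinj : Function.Injective c := by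
    intro i i' hii
    by_contra hne
    have h1 := (hcidx i).1
    have h2 := (hcidx i').1
    have hivne : i.val ≠ i'.val := fun h => hne (Fin.ext h)
    rcases Nat.lt_or_ge (b - 1 - i.val) (b - 1 - i'.val) with h | h
    · exact hmin (b - 1 - i'.val) (by omega) ⟨b - 1 - i.val, h, hii⟩
    · have hlt : b - 1 - i'.val < b - 1 - i.val := by
        have := i.isLt; have := i'.isLt; omega
      exact hmin (b - 1 - i.val) (by omega) ⟨b - 1 - i'.val, hlt, hii.symm⟩
  have hopcc : IsOPCC E c := by
    refine ⟨hinj, fun j => ?_⟩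
    by_cases hj : j.val < m
    · have hjlt : j < Fin.last m := by
        rw [Fin.lt_iff_val_lt_val, Fin.val_last]
        exact hj
      have hj1 : (j+1).val = j.val + 1 := Fin.val_add_one_of_lt hjlt
      have hidx : b - 1 - j.val = (b - 1 - (j+1).val) + 1 := by
        rw [hj1]; omega
      have := (hstep (b - 1 - (j+1).val)).1
      rw [← hidx] at this
      exact this
    · have hjm : j.val = m := by have := j.isLt; omega
      have hj0 : (j+1).val = 0 := by
        have : j = Fin.last m := Fin.ext (by simp [Fin.val_last, hjm])
        rw [this]
        simp
      have e1 : c j = chain E o a := by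
        simp only [hcdef, hjm]
        congr 1
        omega
      have e2 : c (j+1) = chain E o (b-1) := by simp only [hcdef, hj0, Nat.sub_zero]
      rw [e1, e2]
      have hb1 : b = (b-1)+1 := by omega
      have := (hstep (b-1)).1
      rw [← hb1, ← heq] at this
      exact this
  have hsimple : ∀ j, c j ∉ O := by
    intro j
    have h1 := (hcidx j).1
    have : ∃ t, b - 1 - j.val = t + 1 := ⟨b - 2 - j.val, by omega⟩
    obtain ⟨t, ht⟩ := this
    simp only [hcdef, ht]
    exact (hstep t).2
  have hP2 : CycleSatisfiesP2 E c := by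
    by_contra hfail
    have : Set.range c ∈ S2 E O := ⟨m, c, hopcc, hsimple, hfail, rfl⟩
    rw [hS2] at this
    exact this
  obtain ⟨z, hoff, jstar, hz⟩ := hP2
  -- the witnessed vertex as a chain element with index in (a, b]
  set t0 := b - 1 - jstar.val with ht0
  have ht0r : a ≤ t0 ∧ t0 ≤ b - 1 := hcidx jstar
  set t' := if t0 = a then b else t0 with ht'
  have hcht' : chain E o t' = c jstar := by
    rw [ht']
    split
    · rename_i h
      rw [← heq]
      simp only [hcdef]
      rw [← h]
    · rfl
  have ht'r : a + 1 ≤ t' ∧ t' ≤ b := by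
    rw [ht']
    split
    · omega
    · rename_i h
      omega
  -- predecessor on the chain
  have hwit : UniqueInNbr E (c jstar) (chain E o (t' - 1)) := by
    have := (hstep (t' - 1)).1
    have ht'1 : t' - 1 + 1 = t' := by omega
    rw [ht'1, hcht'] at this
    exact this
  have hpredmem : chain E o (t' - 1) ∈ Set.range c := by
    refine ⟨⟨b - t', by omega⟩, ?_⟩
    simp only [hcdef]
    congr 1
    omega
  -- contradiction with unsafety of chain (t'-1)
  have hunsafe := hcon (t' - 1)
  rw [SafeFor] at hunsafe
  push_neg at hunsafe
  obtain ⟨u, hu, huO, hbad⟩ := hunsafe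
  have hueq : u = c jstar := uin_eq hu hwit
  subst hueq
  have hzx : z ≠ chain E o (t' - 1) := by
    intro h
    rw [h] at hoff
    obtain ⟨i, hi⟩ := hpredmem
    exact hoff i hi
  have hB := hbad ⟨z, hzx, hz⟩
  obtain ⟨m₁, c₁, hc₁, hs₁, ⟨j₁, hj₁⟩, hnow⟩ := hB
  have hre : Set.range c₁ = Set.range c :=
    opcc_range_eq hc₁ hopcc ⟨j₁, hj₁⟩ ⟨jstar, rfl⟩
  refine hnow z ?_ hzx j₁ (hj₁ ▸ hz)
  rw [hre]
  intro hmem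
  obtain ⟨i, hi⟩ := hmem
  exact hoff i hi

lemma moveB [Fintype V] {E : V → V → Prop} {O : Set V} (hS2 : S2 E O = ∅) {o : V} (ho : o ∈ O)
    {v : V} (hv : v ∈ Mbar E O) :
    ∃ x, Mbar (Redirect E x v) O ⊆ Mbar E O \ {v} ∧ S2 (Redirect E x v) O = ∅ := by
  classical
  have hex := exists_safe_chain hS2 ho
  set i₀ := Nat.find hex with hi₀
  set x := chain E o i₀ with hx
  have hsafe : SafeFor E O x := Nat.find_spec hex
  have hminu : ∀ k < i₀, ¬ SafeFor E O (chain E o k) := fun k hk => Nat.find_min hex hk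
  refine ⟨x, ?_, ?_⟩
  · rintro u ⟨huO, hnt⟩
    have huv : u ≠ v := by
      intro h
      subst h
      exact hnt ⟨x, uin_redirect_self.2 rfl⟩
    by_cases huM : u ∈ Mbar E O
    · exact ⟨huM, huv⟩
    exfalso
    have : ∃ w, UniqueInNbr E u w := by
      simp only [Mbar, Set.mem_setOf_eq, not_and, not_not] at huM
      exact huM huO
    obtain ⟨w, hw⟩ := this
    by_cases hwx : w = x
    · subst hwx
      obtain ⟨z, hzx, hz⟩ := (hsafe u hw huO).1
      exact hnt ⟨z, (uin_redirect_ne hzx).2 hz⟩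
    · exact hnt ⟨w, (uin_redirect_ne hwx).2 hw⟩
  · rw [Set.eq_empty_iff_forall_notMem]
    rintro W ⟨m', c', hc', hs', hfail', hrange⟩
    by_cases hxr : x ∈ Set.range c'
    · -- minimal chain index landing on the cycle
      have hexk : ∃ k, chain E o k ∈ Set.range c' := ⟨i₀, hxr⟩
      set j₁ := Nat.find hexk with hj₁def
      have hj₁mem : chain E o j₁ ∈ Set.range c' := Nat.find_spec hexk
      have hj₁min : ∀ k < j₁, chain E o k ∉ Set.range c' := fun k hk => Nat.find_min hexk hk
      have hj₁le : j₁ ≤ i₀ := Nat.find_le hxr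
      have hj₁pos : 1 ≤ j₁ := by
        rcases Nat.eq_zero_or_pos j₁ with h | h
        · exfalso
          rw [h] at hj₁mem
          obtain ⟨i, hi⟩ := hj₁mem
          exact hs' i (hi ▸ ho)
        · exact h
      have hj₁lt : j₁ - 1 < i₀ := by
        rcases Nat.lt_or_ge (j₁ - 1) i₀ with h | h
        · exact h
        · exfalso; omega
      have hwit : UniqueInNbr E (chain E o j₁) (chain E o (j₁ - 1)) := by
        have := (unsafe_chain_step (hminu (j₁ - 1) hj₁lt)).1
        rwa [Nat.sub_add_cancel hj₁pos] at this
      have hprednot : chain E o (j₁ - 1) ∉ Set.range c' := hj₁min (j₁ - 1) (by omega)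
      have hpredx : chain E o (j₁ - 1) ≠ x := by
        intro h
        rw [h] at hprednot
        exact hprednot hxr
      obtain ⟨jj, hjj⟩ := hj₁mem
      refine hfail' ⟨chain E o (j₁ - 1), fun k hk => hprednot ⟨k, hk⟩, jj, ?_⟩
      rw [hjj]
      exact (uin_redirect_ne hpredx).2 hwit
    · have hc'E : IsOPCC E c' := by
        refine ⟨hc'.1, fun j => ?_⟩
        have hne : c' (j+1) ≠ x := fun h => hxr (h ▸ ⟨j+1, rfl⟩)
        exact (uin_redirect_ne hne).1 (hc'.2 j)
      by_cases hPE : CycleSatisfiesP2 E c'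
      · obtain ⟨z, hoff, j, hz⟩ := hPE
        by_cases hzx : z = x
        · subst hzx
          obtain ⟨z', hz'r, hz'x, j', hz'⟩ :=
            (hsafe (c' j) hz (hs' j)).2 m' c' hc'E hs' ⟨j, rfl⟩
          exact hfail' ⟨z', fun k hk => hz'r ⟨k, hk⟩, j', (uin_redirect_ne hz'x).2 hz'⟩
        · exact hfail' ⟨z, hoff, j, (uin_redirect_ne hzx).2 hz⟩
      · have : Set.range c' ∈ S2 E O := ⟨m', c', hc'E, hs', hPE, rfl⟩
        rw [hS2] at this
        exact this

end MoveB

section Upper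

variable {V : Type*} [Fintype V]

lemma control_refl (E : V → V → Prop) (Λ : Set V) : Control E E Λ := fun _ _ _ => Iff.rfl

lemma upper_aux {O : Set V} (hO : O.Nonempty) :
    ∀ (N : ℕ) (E : V → V → Prop), (Mbar E O).ncard + (S2 E O).ncard ≤ N →
    ∃ (Λ : Set V) (Ehat : V → V → Prop),
      Λ.ncard ≤ (Mbar E O).ncard + (S2 E O).ncard ∧ Control E Ehat Λ ∧
      SatisfiesP1 Ehat O ∧ SatisfiesP2 Ehat O := by
  intro N
  induction N with
  | zero =>
    intro E hE
    have hM : Mbar E O = ∅ := by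
      rw [← Set.ncard_eq_zero (Set.toFinite _)]
      omega
    have hS : S2 E O = ∅ := by
      rw [← Set.ncard_eq_zero (Set.toFinite _)]
      omega
    exact ⟨∅, E, by simp, control_refl E ∅, base_P1 hM, base_P2 hM hS⟩
  | succ N ih =>
    intro E hE
    by_cases hM : Mbar E O = ∅
    · by_cases hS : S2 E O = ∅
      · exact ⟨∅, E, by simp, control_refl E ∅, base_P1 hM, base_P2 hM hS⟩
      · -- MOVE D : Mbar empty, S2 nonempty
        obtain ⟨W, hW⟩ := Set.nonempty_iff_ne_empty.2 hS
        have hWmem := hW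
        obtain ⟨m, c, hc, hcs, hcf, hrange⟩ := hW
        have hface : ∀ u ∈ Set.range c, ∀ x, UniqueInNbr E u x → x ∈ Set.range c := by
          rintro u ⟨j, rfl⟩ x hx
          have h := failing_target hc hcf hx
          exact h ▸ ⟨j+1, rfl⟩
        have hSO : ∀ u ∈ Set.range c, u ∉ O := by
          rintro u ⟨j, rfl⟩
          exact hcs j
        obtain ⟨x, hxS, hxsafe⟩ := exists_safe_off hO (Set.range c) hSO hface
        obtain ⟨hMsub, hSsub⟩ := moveD hc hcs hcf hxsafe hxS
        set E' := Redirect E x (c 0) with hE'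
        have hWS : W ∈ S2 E O := hWmem
        have hc1 : (Mbar E' O).ncard ≤ (Mbar E O).ncard :=
          Set.ncard_le_ncard hMsub (Set.toFinite _)
        have hc2 : (S2 E' O).ncard ≤ (S2 E O).ncard - 1 := by
        -- S2 E' ⊆ S2 E \ {range c} and range c = W ∈ S2 E
          have h1 : (S2 E' O).ncard ≤ (S2 E O \ {Set.range c}).ncard :=
            Set.ncard_le_ncard hSsub (Set.toFinite _)
          have h2 : (S2 E O \ {Set.range c}).ncard = (S2 E O).ncard - 1 :=
            Set.ncard_diff_singleton_of_mem (hrange ▸ hWS)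
          omega
        have hpos : 1 ≤ (S2 E O).ncard :=
          Set.ncard_pos (Set.toFinite _) |>.2 ⟨W, hWS⟩
        obtain ⟨Λ', Ehat, hΛ, hctl, hP1, hP2⟩ := ih E' (by omega)
        refine ⟨insert x Λ', Ehat, ?_, ?_, hP1, hP2⟩
        · have := Set.ncard_insert_le x Λ'
          omega
        · intro w hw u
          have hw' : w ∉ Λ' := fun h => hw (Set.mem_insert_of_mem _ h)
          have hwx : w ≠ x := fun h => hw (h ▸ Set.mem_insert _ _)
          rw [hctl w hw' u]
          simp [hE', Redirect, hwx]
    · obtain ⟨v, hv⟩ := Set.nonempty_iff_ne_empty.2 hM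
      have hvM : v ∈ Mbar E O := hv
      have hposM : 1 ≤ (Mbar E O).ncard :=
        Set.ncard_pos (Set.toFinite _) |>.2 ⟨v, hvM⟩
      by_cases hS : S2 E O = ∅
      · -- MOVE B : Mbar nonempty, S2 empty
        obtain ⟨o, ho⟩ := hO
        obtain ⟨x, hMsub, hSemp⟩ := moveB hS ho hvM
        set E' := Redirect E x v with hE'
        have hc1 : (Mbar E' O).ncard ≤ (Mbar E O).ncard - 1 := by
          have h1 : (Mbar E' O).ncard ≤ (Mbar E O \ {v}).ncard :=
            Set.ncard_le_ncard hMsub (Set.toFinite _)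
          have h2 : (Mbar E O \ {v}).ncard = (Mbar E O).ncard - 1 :=
            Set.ncard_diff_singleton_of_mem hvM
          omega
        have hc2 : (S2 E' O).ncard = 0 := by rw [hSemp]; simp
        obtain ⟨Λ', Ehat, hΛ, hctl, hP1, hP2⟩ := ih E' (by omega)
        refine ⟨insert x Λ', Ehat, ?_, ?_, hP1, hP2⟩
        · have := Set.ncard_insert_le x Λ'
          omega
        · intro w hw u
          have hw' : w ∉ Λ' := fun h => hw (Set.mem_insert_of_mem _ h)
          have hwx : w ≠ x := fun h => hw (h ▸ Set.mem_insert _ _)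
          rw [hctl w hw' u]
          simp [hE', Redirect, hwx]
      · -- MOVE C : Mbar nonempty, S2 nonempty
        obtain ⟨W, hW⟩ := Set.nonempty_iff_ne_empty.2 hS
        have hWmem := hW
        obtain ⟨m, c, hc, hcs, hcf, hrange⟩ := hW
        obtain ⟨hMsub, hSsub⟩ := moveC hvM hc hcs hcf
        set E' := Redirect E (c 0) v with hE'
        have hc1 : (Mbar E' O).ncard ≤ (Mbar E O).ncard := by
          have h1 : (Mbar E' O).ncard ≤ ((Mbar E O \ {v}) ∪ {c (0-1)}).ncard :=
            Set.ncard_le_ncard hMsub (Set.toFinite _)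
          have h2 : ((Mbar E O \ {v}) ∪ {c (0-1)}).ncard ≤ (Mbar E O \ {v}).ncard + 1 := by
            have := Set.ncard_union_le (Mbar E O \ {v}) {c (0-1)}
            simpa using this
          have h3 : (Mbar E O \ {v}).ncard = (Mbar E O).ncard - 1 :=
            Set.ncard_diff_singleton_of_mem hvM
          omega
        have hc2 : (S2 E' O).ncard ≤ (S2 E O).ncard - 1 := by
          have h1 : (S2 E' O).ncard ≤ (S2 E O \ {Set.range c}).ncard :=
            Set.ncard_le_ncard hSsub (Set.toFinite _)
          have h2 : (S2 E O \ {Set.range c}).ncard = (S2 E O).ncard - 1 :=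
            Set.ncard_diff_singleton_of_mem (hrange ▸ hWmem)
          omega
        have hposS : 1 ≤ (S2 E O).ncard :=
          Set.ncard_pos (Set.toFinite _) |>.2 ⟨W, hWmem⟩
        obtain ⟨Λ', Ehat, hΛ, hctl, hP1, hP2⟩ := ih E' (by omega)
        refine ⟨insert (c 0) Λ', Ehat, ?_, ?_, hP1, hP2⟩
        · have := Set.ncard_insert_le (c 0) Λ'
          omega
        · intro w hw u
          have hw' : w ∉ Λ' := fun h => hw (Set.mem_insert_of_mem _ h)
          have hwx : w ≠ c 0 := fun h => hw (h ▸ Set.mem_insert _ _)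
          rw [hctl w hw' u]
          simp [hE', Redirect, hwx]

end Upper

section Lower

variable {V : Type*} [Fintype V]

lemma lower_cycle {E Ehat : V → V → Prop} {O : Set V} {Λ : Set V} (hctl : Control E Ehat Λ)
    (hP1 : SatisfiesP1 Ehat O) (hP2 : SatisfiesP2 Ehat O)
    {m : ℕ} {c : Fin (m+1) → V} (hc : IsOPCC E c) (hcs : ∀ j, c j ∉ O)
    (hcf : ¬ CycleSatisfiesP2 E c) :
    ∃ w ∈ Λ, ∃ j, UniqueInNbr Ehat (c j) w := by
  by_cases hcase : ∃ w ∈ Λ, ∃ j, UniqueInNbr Ehat (c j) w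
  · exact hcase
  exfalso
  push_neg at hcase
  have hnext : ∀ j, UniqueInNbr Ehat (c j) (c (j+1)) := by
    intro j
    obtain ⟨w, hw⟩ := hP1 (c j) (hcs j)
    have hwΛ : w ∉ Λ := fun h => hcase w h j hw
    have hwE : UniqueInNbr E (c j) w := (uin_control hctl hwΛ).1 hw
    have h := failing_target hc hcf hwE
    rwa [h] at hw
  have hcyc : IsCycle Ehat c := ⟨hc.1, fun j => (hnext j).1⟩
  obtain ⟨z, hoff, j, hz⟩ := hP2 m c hcyc hcs
  by_cases hzΛ : z ∈ Λ
  · exact hcase z hzΛ j hz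
  · exact hcf ⟨z, hoff, j, (uin_control hctl hzΛ).1 hz⟩

lemma s2_elem_not_mbar {E : V → V → Prop} {O : Set V} {S : Set V} (hS : S ∈ S2 E O)
    {u : V} (hu : u ∈ S) : u ∉ Mbar E O := by
  obtain ⟨m, c, hc, hcs, hcf, rfl⟩ := hS
  obtain ⟨j, rfl⟩ := hu
  exact fun h => h.2 ⟨c (j+1), hc.2 j⟩

lemma s2_eq_of_mem {E : V → V → Prop} {O : Set V} {S S' : Set V}
    (hS : S ∈ S2 E O) (hS' : S' ∈ S2 E O) {u : V} (hu : u ∈ S) (hu' : u ∈ S') : S = S' := by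
  obtain ⟨m, c, hc, _, _, rfl⟩ := hS
  obtain ⟨m', c', hc', _, _, rfl⟩ := hS'
  exact opcc_range_eq hc hc' hu hu'

lemma card_sum_le_of_inj {E : V → V → Prop} {O : Set V} (T : Set V)
    (f : V → V) (hf : ∀ v ∈ Mbar E O, f v ∈ T ∧ UniqueInNbr E v (f v))
    : True := trivial

lemma lower_bound {E : V → V → Prop} (O : Set V) (Λ : Set V) (Ehat : V → V → Prop)
    (hctl : Control E Ehat Λ) (hP1 : SatisfiesP1 Ehat O) (hP2 : SatisfiesP2 Ehat O) :
    (Mbar E O).ncard + (S2 E O).ncard ≤ Λ.ncard := by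
  classical
  have hf : ∀ v : ↥(Mbar E O), ∃ w, w ∈ Λ ∧ UniqueInNbr Ehat v.1 w := by
    rintro ⟨v, hv⟩
    obtain ⟨w, hw⟩ := hP1 v hv.1
    refine ⟨w, ?_, hw⟩
    by_contra hwΛ
    exact hv.2 ⟨w, (uin_control hctl hwΛ).1 hw⟩
  have hg : ∀ S : ↥(S2 E O), ∃ w, w ∈ Λ ∧ ∃ u ∈ S.1, UniqueInNbr Ehat u w := by
    rintro ⟨S, hS⟩
    obtain ⟨m, c, hc, hcs, hcf, rfl⟩ := hS
    obtain ⟨w, hwΛ, j, hw⟩ := lower_cycle hctl hP1 hP2 hc hcs hcf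
    exact ⟨w, hwΛ, c j, ⟨j, rfl⟩, hw⟩
  set F : ↥(Mbar E O) ⊕ ↥(S2 E O) → ↥Λ := fun a =>
    Sum.elim (fun v => (⟨(hf v).choose, (hf v).choose_spec.1⟩ : ↥Λ))
      (fun S => (⟨(hg S).choose, (hg S).choose_spec.1⟩ : ↥Λ)) a with hF
  have hFinj : Function.Injective F := by
    rintro (v₁ | S₁) (v₂ | S₂) hEq <;>
      simp only [hF, Sum.elim_inl, Sum.elim_inr, Subtype.mk.injEq] at hEq
    · have h1 := (hf v₁).choose_spec.2
      have h2 := (hf v₂).choose_spec.2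
      rw [hEq] at h1
      have : (v₁ : V) = v₂ := uin_eq h1 h2
      simp only [Sum.inl.injEq]
      exact Subtype.ext this
    · exfalso
      have h1 := (hf v₁).choose_spec.2
      obtain ⟨u, huS, h2⟩ := (hg S₂).choose_spec.2
      rw [hEq] at h1
      have : (v₁ : V) = u := uin_eq h1 h2
      exact s2_elem_not_mbar S₂.2 (this ▸ huS) v₁.2
    · exfalso
      obtain ⟨u, huS, h2⟩ := (hg S₁).choose_spec.2
      have h1 := (hf v₂).choose_spec.2
      rw [hEq] at h2
      have : (v₂ : V) = u := uin_eq h1 h2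
      exact s2_elem_not_mbar S₁.2 (this ▸ huS) v₂.2
    · obtain ⟨u₁, huS₁, h1⟩ := (hg S₁).choose_spec.2
      obtain ⟨u₂, huS₂, h2⟩ := (hg S₂).choose_spec.2
      rw [hEq] at h1
      have hu : u₁ = u₂ := uin_eq h1 h2
      simp only [Sum.inr.injEq]
      exact Subtype.ext (s2_eq_of_mem S₁.2 S₂.2 (hu ▸ huS₁) huS₂)
  have hfin1 : Finite ↥(Mbar E O) := Set.Finite.to_subtype (Set.toFinite _)
  have hfin2 : Finite ↥(S2 E O) := Set.Finite.to_subtype (Set.toFinite _)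
  have hfin3 : Finite ↥Λ := Set.Finite.to_subtype (Set.toFinite _)
  have hcard : Nat.card (↥(Mbar E O) ⊕ ↥(S2 E O)) ≤ Nat.card ↥Λ :=
    Nat.card_le_card_of_injective F hFinj
  rw [Nat.card_sum, Nat.card_coe_set_eq, Nat.card_coe_set_eq,
    Nat.card_coe_set_eq] at hcard
  exact hcard

lemma size_bound (E : V → V → Prop) (O : Set V) (hO : O.Nonempty) :
    (Mbar E O).ncard + (S2 E O).ncard ≤ (Set.univ : Set V).ncard := by
  classical
  have hg : ∀ S : ↥(S2 E O), ∃ u, u ∈ S.1 := by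
    rintro ⟨S, hS⟩
    obtain ⟨m, c, hc, hcs, hcf, rfl⟩ := hS
    exact ⟨c 0, ⟨0, rfl⟩⟩
  set F : ↥(Mbar E O) ⊕ ↥(S2 E O) → V := fun a =>
    Sum.elim (fun v : ↥(Mbar E O) => (v : V)) (fun S : ↥(S2 E O) => (hg S).choose) a with hF
  have hFinj : Function.Injective F := by
    rintro (v₁ | S₁) (v₂ | S₂) hEq <;>
      simp only [hF, Sum.elim_inl, Sum.elim_inr] at hEq
    · simp only [Sum.inl.injEq]; exact Subtype.ext hEq
    · exact absurd v₁.2 (hEq ▸ s2_elem_not_mbar S₂.2 (hg S₂).choose_spec)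
    · exact absurd v₂.2 (hEq ▸ s2_elem_not_mbar S₁.2 (hg S₁).choose_spec)
    · simp only [Sum.inr.injEq]
      exact Subtype.ext (s2_eq_of_mem S₁.2 S₂.2 ((hg S₁).choose_spec)
        (hEq ▸ (hg S₂).choose_spec))
  have hfin1 : Finite ↥(Mbar E O) := Set.Finite.to_subtype (Set.toFinite _)
  have hfin2 : Finite ↥(S2 E O) := Set.Finite.to_subtype (Set.toFinite _)
  have hcard : Nat.card (↥(Mbar E O) ⊕ ↥(S2 E O)) ≤ Nat.card V :=
    Nat.card_le_card_of_injective F hFinj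
  rw [Nat.card_sum, Nat.card_coe_set_eq, Nat.card_coe_set_eq] at hcard
  rw [Set.ncard_univ]
  exact hcard

end Lower

/-- For an arbitrary marked digraph with at least one marked vertex,
`N*_G = |M̄_G| + |S²_G|`: there is a controlled set of that cardinality whose
control yields a marked digraph satisfying Properties P1 and P2, and no
smaller set admits such a control. -/
theorem min_controlled_card_eq_Mbar_add_S2 {V : Type*} [Fintype V]
    (E : V → V → Prop) (O : Set V) (hO : O.Nonempty) :
    (∃ (Λ : Set V) (Ehat : V → V → Prop),
        Λ.ncard = (Mbar E O).ncard + (S2 E O).ncard ∧ Control E Ehat Λ ∧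
        SatisfiesP1 Ehat O ∧ SatisfiesP2 Ehat O) ∧
    (∀ (Λ : Set V) (Ehat : V → V → Prop),
        Control E Ehat Λ → SatisfiesP1 Ehat O → SatisfiesP2 Ehat O →
        (Mbar E O).ncard + (S2 E O).ncard ≤ Λ.ncard) := by
  constructor
  · obtain ⟨Λ₀, Ehat, hΛ₀, hctl, hP1, hP2⟩ :=
      upper_aux hO ((Mbar E O).ncard + (S2 E O).ncard) E le_rfl
    obtain ⟨Λ, hsub, _, hcard⟩ :=
      Set.exists_subsuperset_card_eq (Set.subset_univ Λ₀) hΛ₀ (size_bound E O hO)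
    refine ⟨Λ, Ehat, hcard, ?_, hP1, hP2⟩
    intro w hw u
    exact hctl w (fun h => hw (hsub h)) u
  · exact fun Λ Ehat h1 h2 h3 => lower_bound O Λ Ehat h1 h2 h3
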